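/- Let n ≥ 1 be an integer, s real with 0 < s < n/2, and q = (n+2s)/n. Then for every m ∈ [0, 1/2]: 1 − m^q − (1−m)^q ≥ (2^q − 2)·m^q. -/
import Mathlib


noncomputable section

open Real

/-- **Elementary concavity inequality:** for `q = (n+2s)/n` and `m ∈ [0, 1/2]`,
`1 - m^q - (1-m)^q ≥ (2^q - 2) m^q`. -/
theorem one_sub_rpow_ineq (n : ℕ) (hn : 1 ≤ n) (s : ℝ) (hs : 0 < s)
    (hs' : s < (n : ℝ) / 2) (m : ℝ) (hm0 : 0 ≤ m) (hm : m ≤ 1 / 2) :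
    1 - m ^ (((n : ℝ) + 2 * s) / (n : ℝ)) - (1 - m) ^ (((n : ℝ) + 2 * s) / (n : ℝ)) ≥
      ((2 : ℝ) ^ (((n : ℝ) + 2 * s) / (n : ℝ)) - 2) * m ^ (((n : ℝ) + 2 * s) / (n : ℝ)) := by
  set q : ℝ := ((n : ℝ) + 2 * s) / (n : ℝ) with hq
  have hn0 : (0 : ℝ) < n := by exact_mod_cast hn
  have hq1 : 1 ≤ q := by
    rw [hq, le_div_iff₀ hn0]; nlinarith
  have hconv := convexOn_rpow hq1
  have h0 : (0:ℝ) ∈ Set.Ici (0:ℝ) := Set.mem_Ici.2 le_rfl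
  have h1 : (1:ℝ) ∈ Set.Ici (0:ℝ) := Set.mem_Ici.2 zero_le_one
  have hhalf : (1/2:ℝ) ∈ Set.Ici (0:ℝ) := by norm_num
  have ht0 : 0 ≤ 1 - 2*m := by linarith
  have ht1 : 0 ≤ 2*m := by linarith
  -- m^q ≤ 2m * (1/2)^q
  have hA := hconv.2 h0 hhalf ht0 ht1 (by ring)
  simp only [smul_eq_mul, mul_zero, zero_add] at hA
  have hA' : m ^ q ≤ 2*m * (1/2:ℝ)^q := by
    rw [Real.zero_rpow (by linarith : q ≠ 0)] at hA
    have hm' : 2*m * (1/2:ℝ) = m := by ring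
    rw [hm'] at hA; linarith
  -- (1-m)^q ≤ (1-2m) + 2m*(1/2)^q
  have hB := hconv.2 h1 hhalf ht0 ht1 (by ring)
  simp only [smul_eq_mul, mul_one] at hB
  have hB' : (1-m) ^ q ≤ (1-2*m) + 2*m * (1/2:ℝ)^q := by
    have h1m : (1-2*m) + 2*m * (1/2:ℝ) = 1 - m := by ring
    rw [h1m, Real.one_rpow, mul_one] at hB
    exact hB
  have hC : (2:ℝ)^q * (1/2:ℝ)^q = 1 := by
    rw [← Real.mul_rpow (by norm_num) (by norm_num)]
    norm_num
  have hC1 : (1:ℝ) ≤ (2:ℝ)^q := by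
    calc (1:ℝ) = (2:ℝ)^(0:ℝ) := by simp
      _ ≤ (2:ℝ)^q := Real.rpow_le_rpow_of_exponent_le (by norm_num) (by linarith)
  nlinarith [mul_le_mul_of_nonneg_left hA' (by linarith : (0:ℝ) ≤ (2:ℝ)^q - 1)]
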